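/- arXiv:2503.04525 — 5 statements merged into one kernel-verified Lean document; each statement's English description precedes it below -/
import Mathlib

section
/- Let A be a DOCA with n states and let w be the length-lexicographically minimal word reaching a configuration 𝔠 = (s, m) from the initial configuration. Then during the run of w, no configuration with counter value greater than m + n² is encountered, and consequently |w| < n·m + n·(n²+1). -/
inductive CAct where
  | add (d : ℤ) : CAct
  | reset : CAct

/-- A deterministic one-counter automaton over alphabet `α`:
states `Fin n`, zero-test transitions, counter updates of magnitude at most 1 or reset. -/
structure DOCA (α : Type) where
  n : ℕ
  ι : Fin n
  F : Finset (Fin n)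
  δ : Fin n → Bool → α → Fin n × CAct
  bounded : ∀ q b a d, (δ q b a).2 = CAct.add d → d.natAbs ≤ 1
  zeroSafe : ∀ q a d, (δ q true a).2 = CAct.add d → 0 ≤ d

namespace DOCA
variable {α : Type}

def step (M : DOCA α) (c : Fin M.n × ℕ) (a : α) : Fin M.n × ℕ :=
  match M.δ c.1 (c.2 == 0) a with
  | (q, CAct.add d) => (q, ((c.2 : ℤ) + d).toNat)
  | (q, CAct.reset) => (q, 0)

/-- The run of a word from a configuration. -/
def run (M : DOCA α) (c : Fin M.n × ℕ) (w : List α) : Fin M.n × ℕ :=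
  w.foldl M.step c

/-- Configuration reached from the initial configuration. -/
def reach (M : DOCA α) (w : List α) : Fin M.n × ℕ :=
  M.run (M.ι, 0) w

def accepts (M : DOCA α) (w : List α) : Prop :=
  (M.reach w).1 ∈ M.F

/-- No reset transition occurs during the run of `w` from `c`. -/
def noResetOn (M : DOCA α) (c : Fin M.n × ℕ) (w : List α) : Prop :=
  ∀ p a, p ++ [a] <+: w →
    (M.δ (M.run c p).1 ((M.run c p).2 == 0) a).2 ≠ CAct.reset

end DOCA

/-- Length-lexicographic (strict) order on words: shorter first,
then lexicographic at equal length. -/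
def llex {α : Type} [LinearOrder α] (u v : List α) : Prop :=
  u.length < v.length ∨ (u.length = v.length ∧
    ∃ (w₁ w₂ w₃ : List α) (a b : α), a < b ∧ u = w₁ ++ a :: w₂ ∧ v = w₁ ++ b :: w₃)
namespace LexminAux

open DOCA

variable {α : Type}

/-- Configuration after reading the first `i` letters of `w`. -/
def pos (M : DOCA α) (w : List α) (i : ℕ) : Fin M.n × ℕ :=
  M.reach (w.take i)

lemma run_append (M : DOCA α) (c : Fin M.n × ℕ) (u v : List α) :
    M.run c (u ++ v) = M.run (M.run c u) v := by
  simp [DOCA.run, List.foldl_append]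

lemma run_cons (M : DOCA α) (c : Fin M.n × ℕ) (a : α) (u : List α) :
    M.run c (a :: u) = M.run (M.step c a) u := rfl

lemma pos_zero (M : DOCA α) (w : List α) : pos M w 0 = (M.ι, 0) := rfl

lemma pos_run (M : DOCA α) (w : List α) (i k : ℕ) :
    M.run (pos M w i) ((w.drop i).take k) = pos M w (i + k) := by
  rw [pos, pos, DOCA.reach, DOCA.reach, List.take_add, run_append]

lemma pos_succ (M : DOCA α) (w : List α) (i : ℕ) (h : i < w.length) :
    pos M w (i + 1) = M.step (pos M w i) (w.get ⟨i, h⟩) := by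
  have := pos_run M w i 1
  rw [List.take_one, List.head?_drop, List.getElem?_eq_getElem h] at this
  rw [← this]
  rfl

lemma pos_length (M : DOCA α) (w : List α) : pos M w w.length = M.reach w := by
  rw [pos, List.take_length]

lemma pos_stable (M : DOCA α) (w : List α) (i : ℕ) (h : w.length ≤ i) :
    pos M w i = M.reach w := by
  rw [pos, List.take_of_length_le h]

end LexminAux
namespace LexminAux

variable {α : Type}

lemma step_eq_add (M : DOCA α) (c : Fin M.n × ℕ) (a : α) (q : Fin M.n) (d : ℤ)
    (hδ : M.δ c.1 (c.2 == 0) a = (q, CAct.add d)) :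
    M.step c a = (q, ((c.2 : ℤ) + d).toNat) ∧ d.natAbs ≤ 1 := by
  constructor
  · unfold DOCA.step
    rw [hδ]
  · exact M.bounded c.1 (c.2 == 0) a d (by rw [hδ])

lemma step_eq_reset (M : DOCA α) (c : Fin M.n × ℕ) (a : α) (q : Fin M.n)
    (hδ : M.δ c.1 (c.2 == 0) a = (q, CAct.reset)) :
    M.step c a = (q, 0) := by
  unfold DOCA.step
  rw [hδ]

lemma step_le (M : DOCA α) (c : Fin M.n × ℕ) (a : α) :
    (M.step c a).2 ≤ c.2 + 1 := by
  rcases hδ : M.δ c.1 (c.2 == 0) a with ⟨q, cact⟩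
  cases cact with
  | add d =>
    obtain ⟨h1, h2⟩ := step_eq_add M c a q d hδ
    rw [h1]
    simp only
    omega
  | reset =>
    rw [step_eq_reset M c a q hδ]
    simp

lemma step_ge (M : DOCA α) (c : Fin M.n × ℕ) (a : α)
    (h : (M.δ c.1 (c.2 == 0) a).2 ≠ CAct.reset) :
    c.2 ≤ (M.step c a).2 + 1 := by
  rcases hδ : M.δ c.1 (c.2 == 0) a with ⟨q, cact⟩
  cases cact with
  | add d =>
    obtain ⟨h1, h2⟩ := step_eq_add M c a q d hδ
    rw [h1]
    simp only
    omega
  | reset => exact absurd (by rw [hδ]) h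

lemma step_shift (M : DOCA α) (c : Fin M.n × ℕ) (a : α) (D : ℕ) (h1 : D < c.2) :
    M.step (c.1, c.2 - D) a = ((M.step c a).1, (M.step c a).2 - D) := by
  have hflag : ((c.2 - D == 0) : Bool) = (c.2 == 0) := by
    have : c.2 - D ≠ 0 := by omega
    have : c.2 ≠ 0 := by omega
    simp_all
  rcases hδ : M.δ c.1 (c.2 == 0) a with ⟨q, cact⟩
  have hδ' : M.δ (c.1, c.2 - D).1 ((c.2 - D : ℕ) == 0) a = (q, cact) := by
    rw [hflag]; exact hδ
  cases cact with
  | add d =>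
    obtain ⟨e1, hd⟩ := step_eq_add M c a q d hδ
    obtain ⟨e2, _⟩ := step_eq_add M (c.1, c.2 - D) a q d hδ'
    rw [e1, e2]
    simp only [Prod.mk.injEq, true_and]
    omega
  | reset =>
    rw [step_eq_reset M c a q hδ, step_eq_reset M (c.1, c.2 - D) a q hδ']
    simp

lemma run_shift (M : DOCA α) (u : List α) :
    ∀ (c : Fin M.n × ℕ) (D : ℕ),
      (∀ p, p <+: u → p ≠ u → D < (M.run c p).2) →
      M.run (c.1, c.2 - D) u = ((M.run c u).1, (M.run c u).2 - D) := by
  induction u with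
  | nil => intro c D _; rfl
  | cons a u ih =>
    intro c D hp
    have hc : D < c.2 := by
      have := hp [] List.nil_prefix (by simp)
      simpa [DOCA.run] using this
    rw [LexminAux.run_cons, LexminAux.run_cons, step_shift M c a D hc]
    have : M.step c a = ((M.step c a).1, (M.step c a).2) := rfl
    rw [ih (M.step c a) D ?_]
    intro p hpre hne
    have := hp (a :: p) (by exact List.cons_prefix_cons.mpr ⟨rfl, hpre⟩) (by simp [hne])
    simpa [run_cons] using this

end LexminAux
namespace LexminAux

variable {α : Type}

lemma ct_succ_le (M : DOCA α) (w : List α) (i : ℕ) :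
    (pos M w (i + 1)).2 ≤ (pos M w i).2 + 1 := by
  rcases Nat.lt_or_ge i w.length with h | h
  · rw [pos_succ M w i h]
    exact step_le M _ _
  · rw [pos_stable M w (i+1) (by omega), pos_stable M w i h]
    omega

lemma ivt_up (M : DOCA α) (w : List α) (ℓ : ℕ) :
    ∀ j i, i ≤ j → (pos M w i).2 ≤ ℓ → ℓ ≤ (pos M w j).2 →
    ∃ k, i ≤ k ∧ k ≤ j ∧ (pos M w k).2 = ℓ := by
  intro j
  induction j with
  | zero =>
    intro i hij h1 h2
    have hi : i = 0 := by omega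
    subst hi
    exact ⟨0, le_rfl, le_rfl, by omega⟩
  | succ j ih =>
    intro i hij h1 h2
    rcases Nat.eq_or_lt_of_le hij with heq | hlt
    · subst heq
      exact ⟨j + 1, le_rfl, le_rfl, by omega⟩
    · by_cases hℓ : ℓ ≤ (pos M w j).2
      · obtain ⟨k, hk1, hk2, hk3⟩ := ih i (by omega) h1 hℓ
        exact ⟨k, hk1, by omega, hk3⟩
      · have := ct_succ_le M w j
        exact ⟨j + 1, by omega, le_rfl, by omega⟩

end LexminAux
namespace LexminAux

variable {α : Type}

lemma run_pos_prefix (M : DOCA α) (w : List α) (i : ℕ) {p : List α}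
    (hp : p <+: w.drop i) :
    M.run (pos M w i) p = pos M w (i + p.length) := by
  have h : p = (w.drop i).take p.length := List.prefix_iff_eq_take.mp hp
  conv_lhs => rw [h]
  rw [pos_run]

lemma run_pos_drop (M : DOCA α) (w : List α) (j : ℕ) (h : j ≤ w.length) :
    M.run (pos M w j) (w.drop j) = M.reach w := by
  rw [run_pos_prefix M w j (List.prefix_refl _), List.length_drop,
    show j + (w.length - j) = w.length from by omega, pos_length]

lemma pos_inj (M : DOCA α) (w : List α) (s : Fin M.n) (m : ℕ)
    (hreach : M.reach w = (s, m))
    (hshort : ∀ v, M.reach v = (s, m) → w.length ≤ v.length) :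
    ∀ i j, i < j → j ≤ w.length → pos M w i ≠ pos M w j := by
  intro i j hij hjN heq
  have hv : M.reach (w.take i ++ w.drop j) = (s, m) := by
    rw [DOCA.reach, run_append]
    have h1 : M.run (M.ι, 0) (w.take i) = pos M w i := rfl
    rw [h1, heq, run_pos_drop M w j hjN, hreach]
  have := hshort _ hv
  rw [List.length_append, List.length_take, List.length_drop] at this
  omega

end LexminAux
namespace LexminAux

variable {α : Type}

lemma counter_bound (M : DOCA α) (w : List α) (s : Fin M.n) (m : ℕ)
    (hreach : M.reach w = (s, m))
    (hshort : ∀ v, M.reach v = (s, m) → w.length ≤ v.length) :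
    ∀ i, (pos M w i).2 ≤ m + M.n ^ 2 := by
  classical
  by_contra hcon
  push_neg at hcon
  obtain ⟨i0, hi0⟩ := hcon
  have hn : 0 < M.n := s.pos
  have hsq : M.n ^ 2 = M.n * M.n := by ring
  set N := w.length with hN
  have hi0N : i0 ≤ N := by
    by_contra h
    push_neg at h
    rw [pos_stable M w i0 (by omega), hreach] at hi0
    simp at hi0
  -- maximal counter value C attained at position t
  obtain ⟨t, htmem, htmax⟩ := Finset.exists_max_image (Finset.range (N + 1))
    (fun i => (pos M w i).2) ⟨0, by simp⟩
  set C := (pos M w t).2 with hCdef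
  have htN : t ≤ N := by
    have := Finset.mem_range.mp htmem
    omega
  have hCmax : ∀ i, i ≤ N → (pos M w i).2 ≤ C :=
    fun i hi => htmax i (Finset.mem_range.mpr (by omega))
  have hCbig : m + M.n ^ 2 < C := lt_of_lt_of_le hi0 (hCmax i0 hi0N)
  have hC1 : 1 ≤ C := by omega
  have hct0 : (pos M w 0).2 = 0 := rfl
  have hctN : pos M w N = (s, m) := by rw [pos_length]; exact hreach
  have hinj := pos_inj M w s m hreach hshort
  -- the `up` positions
  set up : ℕ → ℕ := fun ℓ => Nat.findGreatest (fun i => (pos M w i).2 = ℓ) t with hupdef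
  have up_le : ∀ ℓ, up ℓ ≤ t := fun ℓ => Nat.findGreatest_le t
  have up_spec : ∀ ℓ, ℓ ≤ C → (pos M w (up ℓ)).2 = ℓ := by
    intro ℓ hℓ
    obtain ⟨k, hk1, hk2, hk3⟩ := ivt_up M w ℓ t 0 (by omega) (by omega) (by omega)
    exact Nat.findGreatest_spec (P := fun i => (pos M w i).2 = ℓ) hk2 hk3
  have up_gt : ∀ ℓ, ℓ ≤ C → ∀ j, up ℓ < j → j ≤ t → ℓ < (pos M w j).2 := by
    intro ℓ hℓ j hj1 hj2
    by_contra hcon2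
    push_neg at hcon2
    obtain ⟨k, hk1, hk2, hk3⟩ := ivt_up M w ℓ t j hj2 hcon2 (by omega)
    have hgt : up ℓ < k := by omega
    exact Nat.findGreatest_is_greatest (P := fun i => (pos M w i).2 = ℓ) hgt hk2 hk3
  -- first reset (or end of word) after t
  set resetAt : ℕ → Prop :=
    fun j => ∃ h : j < N, (M.δ (pos M w j).1 ((pos M w j).2 == 0) (w.get ⟨j, h⟩)).2 = CAct.reset
    with hresetdef
  have hexb : ∃ k, t + k = N ∨ resetAt (t + k) := ⟨N - t, Or.inl (by omega)⟩
  set b := t + Nat.find hexb with hbdef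
  have hbspec : b = N ∨ resetAt b := Nat.find_spec hexb
  have hbmin : ∀ j, t ≤ j → j < b → j ≠ N ∧ ¬ resetAt j := by
    intro j h1 h2
    have h3 := Nat.find_min hexb (m := j - t) (by omega)
    rw [show t + (j - t) = j from by omega] at h3
    push_neg at h3
    exact h3
  have hbN : b ≤ N := by
    rcases hbspec with h | ⟨h, _⟩ <;> omega
  have htb : t ≤ b := by omega
  -- counter decreases by at most one on non-reset steps
  have ct_ge : ∀ j, t ≤ j → j < b → (pos M w j).2 ≤ (pos M w (j + 1)).2 + 1 := by
    intro j h1 h2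
    obtain ⟨hjN', hnr⟩ := hbmin j h1 h2
    have hjN : j < N := by omega
    rw [pos_succ M w j hjN]
    apply step_ge
    intro hres
    exact hnr ⟨hjN, hres⟩
  -- minimal counter value between t and b
  obtain ⟨imin, himinmem, himinmin⟩ := Finset.exists_min_image (Finset.Icc t b)
    (fun i => (pos M w i).2) ⟨t, by simp [htb]⟩
  set vmin := (pos M w imin).2 with hvmindef
  have himin1 : t ≤ imin ∧ imin ≤ b := by simpa using himinmem
  have hvmin_le : ∀ j, t ≤ j → j ≤ b → vmin ≤ (pos M w j).2 :=
    fun j h1 h2 => himinmin j (by simp [h1, h2])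
  have hvminC : vmin ≤ C := hCmax imin (by omega)
  -- the `down` positions
  have hexd : ∀ ℓ : ℕ, ∃ k, b < t + k ∨ (pos M w (t + k)).2 ≤ ℓ :=
    fun ℓ => ⟨b + 1 - t, Or.inl (by omega)⟩
  set down : ℕ → ℕ := fun ℓ => t + Nat.find (hexd ℓ) with hdowndef
  have down_ge : ∀ ℓ, t ≤ down ℓ := fun ℓ => Nat.le_add_right t _
  have down_le : ∀ ℓ, vmin ≤ ℓ → down ℓ ≤ imin := by
    intro ℓ hℓ
    have h1 : Nat.find (hexd ℓ) ≤ imin - t := by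
      apply Nat.find_min'
      right
      rw [show t + (imin - t) = imin from by omega]
      exact hℓ
    have h2 : down ℓ = t + Nat.find (hexd ℓ) := rfl
    omega
  have down_le_b : ∀ ℓ, vmin ≤ ℓ → down ℓ ≤ b := fun ℓ hℓ => le_trans (down_le ℓ hℓ) himin1.2
  have down_spec0 : ∀ ℓ, vmin ≤ ℓ → (pos M w (down ℓ)).2 ≤ ℓ := by
    intro ℓ hℓ
    have h2 : down ℓ = t + Nat.find (hexd ℓ) := rfl
    rcases Nat.find_spec (hexd ℓ) with h | h
    · exfalso
      have := down_le_b ℓ hℓ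
      omega
    · exact h
  have down_gt : ∀ ℓ, ∀ j, t ≤ j → j < down ℓ → ℓ < (pos M w j).2 := by
    intro ℓ j h1 h2
    have h2 : down ℓ = t + Nat.find (hexd ℓ) := rfl
    have h3 := Nat.find_min (hexd ℓ) (m := j - t) (by omega)
    rw [show t + (j - t) = j from by omega] at h3
    push_neg at h3
    exact h3.2
  have down_eq : ∀ ℓ, vmin ≤ ℓ → ℓ ≤ C → (pos M w (down ℓ)).2 = ℓ := by
    intro ℓ h1 h2
    rcases Nat.eq_or_lt_of_le (down_ge ℓ) with heq | hlt
    · have h3 := down_spec0 ℓ h1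
      rw [← heq] at h3 ⊢
      omega
    · have hd1 := down_gt ℓ (down ℓ - 1) (by omega) (by omega)
      have hd2 := ct_ge (down ℓ - 1) (by omega) (by have := down_le_b ℓ h1; omega)
      have hd3 := down_spec0 ℓ h1
      rw [show down ℓ - 1 + 1 = down ℓ from by omega] at hd2
      omega
  -- position comparison facts for `up`
  have up_lt_t : ∀ ℓ, ℓ < C → up ℓ < t := by
    intro ℓ hℓ
    rcases Nat.eq_or_lt_of_le (up_le ℓ) with heq | hlt
    · exfalso
      have h5 := up_spec ℓ (le_of_lt hℓ)
      rw [heq] at h5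
      omega
    · exact hlt
  have up_mono : ∀ ℓ ℓ', ℓ < ℓ' → ℓ' ≤ C → up ℓ < up ℓ' := by
    intro ℓ ℓ' h1 h2
    by_contra hcon2
    push_neg at hcon2
    rcases Nat.eq_or_lt_of_le hcon2 with heq | hlt
    · have e1 := up_spec ℓ (by omega)
      have e2 := up_spec ℓ' h2
      rw [heq] at e2
      omega
    · have h5 := up_gt ℓ' h2 (up ℓ) hlt (up_le ℓ)
      have e1 := up_spec ℓ (by omega)
      omega
  -- the two-sided cut
  have cut2 : ∀ ℓ ℓ', vmin ≤ ℓ → 1 ≤ ℓ → ℓ < ℓ' → ℓ' ≤ C - 1 →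
      (pos M w (up ℓ)).1 = (pos M w (up ℓ')).1 →
      (pos M w (down ℓ)).1 = (pos M w (down ℓ')).1 → False := by
    intro ℓ ℓ' hv1 h1ℓ hll h'C hu hd
    have hℓC : ℓ ≤ C := by omega
    have hℓ'C : ℓ' ≤ C := by omega
    have hv2 : vmin ≤ ℓ' := by omega
    have e1 := up_spec ℓ hℓC
    have e2 := up_spec ℓ' hℓ'C
    have e3 := down_eq ℓ' hv2 hℓ'C
    have e4 := down_eq ℓ hv1 hℓC
    have h12 : up ℓ < up ℓ' := up_mono ℓ ℓ' hll hℓ'C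
    have h2t : up ℓ' < t := up_lt_t ℓ' (by omega)
    have h3t : t ≤ down ℓ' := down_ge ℓ'
    have h34 : down ℓ' < down ℓ := by
      by_contra hcon2
      push_neg at hcon2
      rcases Nat.eq_or_lt_of_le hcon2 with heq | hlt
      · rw [heq] at e4; omega
      · have h5 := down_gt ℓ' (down ℓ) (down_ge ℓ) hlt
        omega
    have h4b : down ℓ ≤ b := down_le_b ℓ hv1
    have h4N : down ℓ ≤ N := by omega
    have h23 : up ℓ' < down ℓ' := by omega
    set D := ℓ' - ℓ with hDdef
    set mid := (w.drop (up ℓ')).take (down ℓ' - up ℓ') with hmiddef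
    have hmidlen : mid.length = down ℓ' - up ℓ' := by
      rw [hmiddef, List.length_take, List.length_drop]
      omega
    have hmid_run : M.run (pos M w (up ℓ')) mid = pos M w (down ℓ') := by
      rw [hmiddef, pos_run, show up ℓ' + (down ℓ' - up ℓ') = down ℓ' from by omega]
    have hcounters : ∀ p, p <+: mid → p ≠ mid → D < (M.run (pos M w (up ℓ')) p).2 := by
      intro p hp hne
      have hp' : p <+: w.drop (up ℓ') := hp.trans (List.take_prefix _ _)
      rw [run_pos_prefix M w (up ℓ') hp']
      have hplen : p.length < down ℓ' - up ℓ' := by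
        have hle := hp.length_le
        rw [hmidlen] at hle
        rcases Nat.eq_or_lt_of_le hle with heq | hlt
        · exact absurd (hp.eq_of_length (by rw [hmidlen]; omega)) hne
        · exact hlt
      rcases Nat.eq_zero_or_pos p.length with hp0 | hppos
      · rw [hp0, show up ℓ' + 0 = up ℓ' from rfl]
        omega
      · rcases le_or_gt (up ℓ' + p.length) t with hjt | hjt
        · have h5 := up_gt ℓ' hℓ'C (up ℓ' + p.length) (by omega) hjt
          omega
        · have h5 := down_gt ℓ' (up ℓ' + p.length) (by omega) (by omega)
          omega
    have hshift := run_shift M mid (pos M w (up ℓ')) D hcounters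
    have hstart : pos M w (up ℓ) = ((pos M w (up ℓ')).1, (pos M w (up ℓ')).2 - D) := by
      rw [Prod.ext_iff]
      refine ⟨hu, ?_⟩
      show (pos M w (up ℓ)).2 = (pos M w (up ℓ')).2 - D
      omega
    have hmid2 : M.run (pos M w (up ℓ)) mid = pos M w (down ℓ) := by
      rw [hstart, hshift, hmid_run, Prod.ext_iff]
      refine ⟨hd.symm, ?_⟩
      show (pos M w (down ℓ')).2 - D = (pos M w (down ℓ)).2
      omega
    have hvreach : M.reach (w.take (up ℓ) ++ (mid ++ w.drop (down ℓ))) = (s, m) := by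
      rw [DOCA.reach, run_append, run_append]
      have h0 : M.run (M.ι, 0) (w.take (up ℓ)) = pos M w (up ℓ) := rfl
      rw [h0, hmid2, run_pos_drop M w (down ℓ) h4N, hreach]
    have hlenv := hshort _ hvreach
    rw [List.length_append, List.length_append, List.length_take, hmidlen,
      List.length_drop] at hlenv
    omega
  -- the one-sided cut (when a reset occurs at b)
  have cut1 : ∀ ℓ ℓ', C - M.n ≤ ℓ → ℓ < ℓ' → ℓ' ≤ C → M.n + 1 ≤ vmin →
      resetAt b → (pos M w (up ℓ)).1 = (pos M w (up ℓ')).1 → False := by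
    intro ℓ ℓ' hCn hll hℓ'C hvm hresb hu
    obtain ⟨hbltN, hδr⟩ := hresb
    have hnn : M.n ≤ M.n * M.n := Nat.le_mul_of_pos_left _ hn
    have hℓC : ℓ ≤ C := by omega
    have e1 := up_spec ℓ hℓC
    have e2 := up_spec ℓ' hℓ'C
    have h12 : up ℓ < up ℓ' := up_mono ℓ ℓ' hll hℓ'C
    have h2t : up ℓ' ≤ t := up_le ℓ'
    have h1ℓ : 1 ≤ ℓ := by omega
    set D := ℓ' - ℓ with hDdef
    have hDn : D ≤ M.n := by omega
    set u1 := (w.drop (up ℓ')).take (b - up ℓ') with hu1def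
    have hu1len : u1.length = b - up ℓ' := by
      rw [hu1def, List.length_take, List.length_drop]
      omega
    have hu1run : M.run (pos M w (up ℓ')) u1 = pos M w b := by
      rw [hu1def, pos_run, show up ℓ' + (b - up ℓ') = b from by omega]
    have hcounters : ∀ p, p <+: u1 → p ≠ u1 → D < (M.run (pos M w (up ℓ')) p).2 := by
      intro p hp hne
      have hp' : p <+: w.drop (up ℓ') := hp.trans (List.take_prefix _ _)
      rw [run_pos_prefix M w (up ℓ') hp']
      have hplen : p.length < b - up ℓ' := by
        have hle := hp.length_le
        rw [hu1len] at hle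
        rcases Nat.eq_or_lt_of_le hle with heq | hlt
        · exact absurd (hp.eq_of_length (by rw [hu1len]; omega)) hne
        · exact hlt
      rcases Nat.eq_zero_or_pos p.length with hp0 | hppos
      · rw [hp0, show up ℓ' + 0 = up ℓ' from rfl]
        omega
      · rcases le_or_gt (up ℓ' + p.length) t with hjt | hjt
        · have h5 := up_gt ℓ' hℓ'C (up ℓ' + p.length) (by omega) hjt
          omega
        · have h5 := hvmin_le (up ℓ' + p.length) (by omega) (by omega)
          omega
    have hshift := run_shift M u1 (pos M w (up ℓ')) D hcounters
    have hstart : pos M w (up ℓ) = ((pos M w (up ℓ')).1, (pos M w (up ℓ')).2 - D) := by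
      rw [Prod.ext_iff]
      refine ⟨hu, ?_⟩
      show (pos M w (up ℓ)).2 = (pos M w (up ℓ')).2 - D
      omega
    have hctb : vmin ≤ (pos M w b).2 := hvmin_le b htb le_rfl
    have f0 : (((pos M w b).2 : ℕ) == 0) = false := by
      simp only [beq_eq_false_iff_ne, ne_eq]
      omega
    have f1 : ((((pos M w b).2 - D : ℕ)) == 0) = false := by
      simp only [beq_eq_false_iff_ne, ne_eq]
      omega
    rw [f0] at hδr
    have hδpair : M.δ (pos M w b).1 false (w.get ⟨b, hbltN⟩) =
        ((M.δ (pos M w b).1 false (w.get ⟨b, hbltN⟩)).1, CAct.reset) := by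
      rw [← hδr]
    set q := (M.δ (pos M w b).1 false (w.get ⟨b, hbltN⟩)).1 with hqdef
    have hstep1 : M.step ((pos M w b).1, (pos M w b).2 - D) (w.get ⟨b, hbltN⟩) = (q, 0) := by
      have h8 : M.δ (pos M w b).1 (((pos M w b).2 - D) == 0) (w.get ⟨b, hbltN⟩)
          = (q, CAct.reset) := by
        rw [f1]
        exact hδpair
      exact step_eq_reset M ((pos M w b).1, (pos M w b).2 - D) _ q h8
    have hstep0 : pos M w (b + 1) = (q, 0) := by
      rw [pos_succ M w b hbltN]
      exact step_eq_reset M (pos M w b) _ q (by rw [f0]; exact hδpair)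
    have hdrop : w.drop (up ℓ') = u1 ++ w.get ⟨b, hbltN⟩ :: w.drop (b + 1) := by
      have h7 : w.get ⟨b, hbltN⟩ :: w.drop (b + 1) = w.drop b := by
        rw [List.get_eq_getElem]
        exact (List.drop_eq_getElem_cons hbltN).symm
      rw [hu1def, h7,
        show w.drop b = (w.drop (up ℓ')).drop (b - up ℓ') from by
          rw [List.drop_drop, show up ℓ' + (b - up ℓ') = b from by omega]]
      exact (List.take_append_drop _ _).symm
    have hvreach : M.reach (w.take (up ℓ) ++ w.drop (up ℓ')) = (s, m) := by
      rw [DOCA.reach, run_append]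
      have h0 : M.run (M.ι, 0) (w.take (up ℓ)) = pos M w (up ℓ) := rfl
      rw [h0, hdrop, run_append, run_cons, hstart, hshift, hu1run, hstep1, ← hstep0,
        run_pos_drop M w (b + 1) (by omega), hreach]
    have hlenv := hshort _ hvreach
    rw [List.length_append, List.length_take, List.length_drop] at hlenv
    omega
  -- final case split
  by_cases hcase : M.n * M.n - M.n < C - max vmin 1
  · -- enough room for the two-sided cut
    have hmaps : ∀ ℓ ∈ Finset.Icc (max vmin 1) (C - 1),
        ((pos M w (up ℓ)).1, (pos M w (down ℓ)).1)
          ∈ (Finset.univ : Finset (Fin M.n)).offDiag := by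
      intro ℓ hℓ
      rw [Finset.mem_Icc] at hℓ
      have hv1 : vmin ≤ ℓ := by omega
      have h1 : 1 ≤ ℓ := by omega
      have hℓC : ℓ ≤ C := by omega
      have e1 := up_spec ℓ hℓC
      have e4 := down_eq ℓ hv1 hℓC
      have hup_lt : up ℓ < t := up_lt_t ℓ (by omega)
      have hne : (pos M w (up ℓ)).1 ≠ (pos M w (down ℓ)).1 := by
        intro heq
        have heq2 : pos M w (up ℓ) = pos M w (down ℓ) := by
          rw [Prod.ext_iff]
          exact ⟨heq, by omega⟩
        exact hinj (up ℓ) (down ℓ) (by have := down_ge ℓ; omega)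
          (by have := down_le_b ℓ hv1; omega) heq2
      simp [Finset.mem_offDiag, hne]
    have hcard : ((Finset.univ : Finset (Fin M.n)).offDiag).card
        < (Finset.Icc (max vmin 1) (C - 1)).card := by
      rw [Finset.offDiag_card, Nat.card_Icc, Finset.card_univ, Fintype.card_fin]
      omega
    obtain ⟨x, hx, y, hy, hxy, hfeq⟩ :=
      Finset.exists_ne_map_eq_of_card_lt_of_maps_to hcard hmaps
    rw [Finset.mem_Icc] at hx hy
    rw [Prod.mk.injEq] at hfeq
    rcases Nat.lt_or_ge x y with hlt | hge
    · exact cut2 x y (by omega) (by omega) hlt (by omega) hfeq.1 hfeq.2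
    · have hlt : y < x := by omega
      exact cut2 y x (by omega) (by omega) hlt (by omega) hfeq.1.symm hfeq.2.symm
  · -- the reset case with the one-sided cut
    push_neg at hcase
    have hnn : M.n ≤ M.n * M.n := Nat.le_mul_of_pos_left _ hn
    have hvm : m + M.n + 1 ≤ vmin := by omega
    have hresb : resetAt b := by
      rcases hbspec with hbn | hr
      · exfalso
        have h9 := hvmin_le b htb le_rfl
        rw [hbn, hctN] at h9
        simp at h9
        omega
      · exact hr
    have hmaps : ∀ ℓ ∈ Finset.Icc (C - M.n) C,
        (pos M w (up ℓ)).1 ∈ (Finset.univ : Finset (Fin M.n)) :=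
      fun ℓ _ => Finset.mem_univ _
    have hcard : (Finset.univ : Finset (Fin M.n)).card
        < (Finset.Icc (C - M.n) C).card := by
      rw [Finset.card_univ, Fintype.card_fin, Nat.card_Icc]
      omega
    obtain ⟨x, hx, y, hy, hxy, hfeq⟩ :=
      Finset.exists_ne_map_eq_of_card_lt_of_maps_to hcard hmaps
    rw [Finset.mem_Icc] at hx hy
    rcases Nat.lt_or_ge x y with hlt | hge
    · exact cut1 x y (by omega) hlt (by omega) (by omega) hresb hfeq
    · exact cut1 y x (by omega) (by omega) (by omega) (by omega) hresb hfeq.symm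




end LexminAux
theorem lexmin_counter_bound (α : Type) [Fintype α] [LinearOrder α]
    (M : DOCA α) (w : List α) (s : Fin M.n) (m : ℕ)
    (hreach : M.reach w = (s, m))
    (hmin : ∀ v, M.reach v = (s, m) → v = w ∨ llex w v) :
    (∀ u, u <+: w → (M.reach u).2 ≤ m + M.n ^ 2) ∧
      w.length < M.n * m + M.n * (M.n ^ 2 + 1) := by
  classical
  have hshort : ∀ v, M.reach v = (s, m) → w.length ≤ v.length := by
    intro v hv
    rcases hmin v hv with rfl | h
    · exact le_rfl
    · rcases h with h | ⟨h, _⟩ <;> omega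
  have hbound := LexminAux.counter_bound M w s m hreach hshort
  have hinj := LexminAux.pos_inj M w s m hreach hshort
  constructor
  · intro u hu
    have h1 : u = w.take u.length := List.prefix_iff_eq_take.mp hu
    rw [h1]
    exact hbound u.length
  · have hmaps : ∀ i ∈ Finset.range (w.length + 1),
        LexminAux.pos M w i
          ∈ (Finset.univ : Finset (Fin M.n)) ×ˢ Finset.range (m + M.n ^ 2 + 1) := by
      intro i _
      rw [Finset.mem_product]
      exact ⟨Finset.mem_univ _, Finset.mem_range.mpr (by have := hbound i; omega)⟩
    have hinjon : Set.InjOn (LexminAux.pos M w) (Finset.range (w.length + 1)) := by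
      intro i hi j hj heq
      simp only [Finset.coe_range, Set.mem_Iio] at hi hj
      by_contra hne
      rcases Nat.lt_or_ge i j with hlt | hge
      · exact hinj i j hlt (by omega) heq
      · exact hinj j i (by omega) (by omega) heq.symm
    have hcard := Finset.card_le_card_of_injOn _ hmaps hinjon
    rw [Finset.card_range, Finset.card_product, Finset.card_univ, Fintype.card_fin,
      Finset.card_range] at hcard
    have hring : M.n * (m + M.n ^ 2 + 1) = M.n * m + M.n * (M.n ^ 2 + 1) := by ring
    omega
end

section
/- Let A be a DOCA and suppose configuration 𝔠_i satisfies 𝔠_i →^y 𝔠_i + d for some word y and positive integer d, where the run of y from 𝔠_i stays strictly above counter value |𝔠_i| except at its start. Then for all k ≥ 0, reading x·y^k from the initial configuration (where x reaches 𝔠_i) reaches 𝔠_i + k·d. -/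
lemma run_append {α : Type} (M : DOCA α) (c : Fin M.n × ℕ) (u v : List α) :
    M.run c (u ++ v) = M.run (M.run c u) v := by
  simp [DOCA.run, List.foldl_append]

lemma shift_prefix {α : Type} (M : DOCA α) (y : List α) (c : Fin M.n × ℕ) (m : ℕ)
    (hc : 0 < c.2) (hnoreset : M.noResetOn c y)
    (habove : ∀ p, p <+: y → p ≠ [] → c.2 < (M.run c p).2) :
    ∀ p, p <+: y → M.run (c.1, c.2 + m) p = ((M.run c p).1, (M.run c p).2 + m) := by
  intro p
  induction p using List.reverseRecOn with
  | nil => intro _; simp [DOCA.run]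
  | append_singleton p a ih =>
    intro hp
    have hp' : p <+: y := (List.prefix_append p [a]).trans hp
    have ihp := ih hp'
    have hq2 : 0 < (M.run c p).2 := by
      rcases eq_or_ne p [] with h | h
      · subst h; simpa [DOCA.run] using hc
      · exact hc.trans (habove p hp' h)
    have h1 : ((M.run c p).2 == 0) = false := by
      simp; omega
    have h2 : ((M.run c p).2 + m == 0) = false := by
      simp; omega
    rw [run_append, run_append, ihp]
    show M.step ((M.run c p).1, (M.run c p).2 + m) a
        = ((M.step (M.run c p) a).1, (M.step (M.run c p) a).2 + m)
    rcases hδ : M.δ (M.run c p).1 false a with ⟨q', act⟩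
    cases act with
    | reset =>
      exfalso
      apply hnoreset p a hp
      rw [h1, hδ]
    | add d' =>
      have hb : d'.natAbs ≤ 1 := M.bounded (M.run c p).1 false a d' (by rw [hδ])
      simp only [DOCA.step, h1, h2, hδ]
      rw [Prod.mk.injEq]
      refine ⟨rfl, ?_⟩
      omega

theorem pump_loop (α : Type) (M : DOCA α) (x y : List α) (c : Fin M.n × ℕ) (d : ℕ)
    (hd : 1 ≤ d) (hx : M.reach x = c) (hc : 0 < c.2)
    (hloop : M.run c y = (c.1, c.2 + d))
    (hnoreset : M.noResetOn c y)
    (habove : ∀ p, p <+: y → p ≠ [] → c.2 < (M.run c p).2) :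
    ∀ k : ℕ, M.reach (x ++ (List.replicate k y).flatten) = (c.1, c.2 + k * d) := by
  have hshift : ∀ m : ℕ, M.run (c.1, c.2 + m) y = (c.1, c.2 + d + m) := by
    intro m
    rw [shift_prefix M y c m hc hnoreset habove y List.prefix_rfl, hloop]
  have key : ∀ k m : ℕ, M.run (c.1, c.2 + m) ((List.replicate k y).flatten)
      = (c.1, c.2 + m + k * d) := by
    intro k
    induction k with
    | zero => intro m; simp [DOCA.run]
    | succ k ih =>
      intro m
      rw [List.replicate_succ, List.flatten_cons, run_append, hshift m]
      have : (c.1, c.2 + d + m) = ((c.1, c.2 + (d + m)) : Fin M.n × ℕ) := by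
        simp [Nat.add_assoc]
      rw [this, ih (d + m)]
      have h' : (k + 1) * d = k * d + d := by ring
      rw [Prod.mk.injEq]
      exact ⟨rfl, by omega⟩
  intro k
  have h0 : M.reach (x ++ (List.replicate k y).flatten)
      = M.run c ((List.replicate k y).flatten) := by
    rw [DOCA.reach, run_append, ← DOCA.reach, hx]
  have hc0 : ((c.1, c.2 + 0) : Fin M.n × ℕ) = c := by simp
  rw [h0, ← hc0, key k 0]
end

section
/- Let A be a DFA, D a DOCA with n states, and suppose for states p_{-2n}, …, p_{l+2n} of A there is a configuration 𝔠 of D and d ≥ 1 with: for each i ∈ [-2n, l+2n] there is a word u_i with A(u_i) = p_i and D(u_i) = 𝔠 + i·d (the sequence is d-winning). If w is a word of length at most n·d such that the run of w in D from 𝔠 involves no reset transition and |𝔠 + i·d| > n·d for all i, then the sequence (A(p_{-2n}, w), …, A(p_{l+2n}, w)) obtained by reading w from each p_i is d-winning, witnessed by the configuration reached by w from 𝔠. -/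
lemma DOCA.key {α : Type} (M : DOCA α) : ∀ (w : List α) (c : Fin M.n × ℕ) (t : ℤ),
    M.noResetOn c w →
    (w.length : ℤ) < (c.2 : ℤ) →
    (w.length : ℤ) < (c.2 : ℤ) + t →
    (c.2 : ℤ) - w.length ≤ ((M.run c w).2 : ℤ) ∧
    M.run (c.1, ((c.2 : ℤ) + t).toNat) w
      = ((M.run c w).1, (((M.run c w).2 : ℤ) + t).toNat) := by
  intro w
  induction w with
  | nil =>
    intro c t _ h1 h2
    exact ⟨by simp [DOCA.run], by simp [DOCA.run]⟩
  | cons a w ih =>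
    intro c t hnr h1 h2
    simp only [List.length_cons, Nat.cast_add, Nat.cast_one] at h1 h2
    have hz : (c.2 == 0) = false := by
      rw [beq_eq_false_iff_ne]; omega
    have hnr0 := hnr [] a (by simp)
    simp only [DOCA.run, List.foldl_nil] at hnr0
    rw [hz] at hnr0
    rcases hs : M.δ c.1 false a with ⟨q, act⟩
    cases act with
    | reset => rw [hs] at hnr0; exact absurd rfl hnr0
    | add e =>
      have hbound : e.natAbs ≤ 1 := M.bounded c.1 false a e (by rw [hs])
      have he : -1 ≤ e ∧ e ≤ 1 := by omega
      have hstep : M.step c a = (q, ((c.2 : ℤ) + e).toNat) := by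
        simp [DOCA.step, hz, hs]
      have hm : ((((c.2 : ℤ) + e).toNat : ℤ)) = (c.2 : ℤ) + e :=
        Int.toNat_of_nonneg (by omega)
      set m : ℕ := ((c.2 : ℤ) + e).toNat with hmdef
      -- noResetOn for the tail
      have hnr' : M.noResetOn (M.step c a) w := by
        intro pp b hpre
        have := hnr (a :: pp) b (by simpa using hpre)
        simpa [DOCA.run] using this
      rw [hstep] at hnr'
      have ih' := ih (q, m) t hnr' (by simp only; omega) (by simp only; omega)
      have hrun : M.run c (a :: w) = M.run (q, m) w := by
        simp only [DOCA.run, List.foldl_cons]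
        rw [hstep]
      constructor
      · rw [hrun]
        have := ih'.1
        simp only [List.length_cons, Nat.cast_add, Nat.cast_one] at this ⊢
        omega
      · -- shifted step
        have hzN : ((((c.2 : ℤ) + t).toNat : ℤ)) = (c.2 : ℤ) + t :=
          Int.toNat_of_nonneg (by omega)
        have hzN0 : (((c.2 : ℤ) + t).toNat == 0) = false := by
          simp; omega
        have hstepN : M.step (c.1, ((c.2 : ℤ) + t).toNat) a
            = (q, ((m : ℤ) + t).toNat) := by
          simp only [DOCA.step, hzN0, hs]
          congr 1
          rw [hm, hzN]
          ring_nf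
        simp only [DOCA.run, List.foldl_cons]
        rw [hstepN, hstep]
        exact ih'.2

theorem dwinning_preserved (α : Type) (M : DOCA α) (s : ℕ) (A : DFA α (Fin s))
    (l : ℕ) (p : ℤ → Fin s) (c : Fin M.n × ℕ) (d : ℕ) (hd : 1 ≤ d)
    (hwin : ∀ i : ℤ, -(2 * M.n : ℤ) ≤ i → i ≤ (l : ℤ) + 2 * M.n →
      ∃ u : List α, A.eval u = p i ∧ 0 ≤ (c.2 : ℤ) + i * d ∧
        M.reach u = (c.1, ((c.2 : ℤ) + i * d).toNat))
    (w : List α) (hw : w.length ≤ M.n * d)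
    (hnoreset : M.noResetOn c w)
    (hhigh : ∀ i : ℤ, -(2 * M.n : ℤ) ≤ i → i ≤ (l : ℤ) + 2 * M.n →
      (M.n * d : ℤ) < (c.2 : ℤ) + i * d) :
    ∀ i : ℤ, -(2 * M.n : ℤ) ≤ i → i ≤ (l : ℤ) + 2 * M.n →
      ∃ u : List α, A.eval u = A.evalFrom (p i) w ∧
        0 ≤ ((M.run c w).2 : ℤ) + i * d ∧
        M.reach u = ((M.run c w).1, (((M.run c w).2 : ℤ) + i * d).toNat) := by
  intro i hlo hhi
  obtain ⟨u, hu, hpos, hreach⟩ := hwin i hlo hhi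
  have hn0 : (M.n : ℤ) * d < (c.2 : ℤ) := by
    have := hhigh 0 (by omega) (by positivity)
    simpa using this
  have hni : (M.n : ℤ) * d < (c.2 : ℤ) + i * d := hhigh i hlo hhi
  have hwlen : (w.length : ℤ) ≤ (M.n : ℤ) * d := by exact_mod_cast hw
  have hk := M.key w c (i * d) hnoreset (by omega) (by omega)
  refine ⟨u ++ w, ?_, by omega, ?_⟩
  · rw [show A.eval (u ++ w) = A.evalFrom A.start (u ++ w) from rfl, DFA.evalFrom_of_append, show A.evalFrom A.start u = p i from hu]
  · show M.run (M.ι, 0) (u ++ w) = _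
    rw [DOCA.run, List.foldl_append]
    have : M.reach u = (c.1, ((c.2 : ℤ) + i * d).toNat) := hreach
    rw [show List.foldl M.step (M.ι, 0) u = M.reach u from rfl, this]
    exact hk.2
end

section
/- Let D be a DOCA with n states, p a state of its P2(n)-behavioural DFA A with |lexmin(p)| = P1(n) (a border state), 𝔠 = D(lexmin(p)) the configuration reached in D by reading lexmin(p). Then lexmin over words reaching 𝔠 in D equals lexmin(p), i.e., the length-lexicographically minimal word reaching the DFA state p also is the minimal word reaching the DOCA configuration 𝔠. -/
theorem lexmin_state_config (α : Type) [Fintype α] [LinearOrder α]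
    (M : DOCA α) (P2 : ℕ) (hP : 3 * (M.n + 1) ^ 4 < P2)
    (s : ℕ) (A : DFA α (Fin s)) (p : Fin s) (w : List α)
    (hkey : ∀ u v : List α, u.length ≤ P2 → v.length ≤ P2 →
      M.reach u = M.reach v → A.eval u = A.eval v)
    (heval : A.eval w = p)
    (hminp : ∀ v, A.eval v = p → v = w ∨ llex w v)
    (hlen : w.length = 3 * (M.n + 1) ^ 4)
    (hbound : ∀ v, M.reach v = M.reach w →
      (∀ v', M.reach v' = M.reach w → v' = v ∨ llex v v') → v.length ≤ P2) :
    ∀ v, M.reach v = M.reach w → v = w ∨ llex w v := by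
  intro v hv
  by_cases h : v.length ≤ P2
  · have hw : w.length ≤ P2 := by omega
    have := hkey v w h hw hv
    rw [heval] at this
    exact hminp v this
  · right; left; omega
end

section
/- Every m-DOCA B with k states can be converted into an equivalent 1-DOCA (standard DOCA) with at most k·m states, where counter updates have magnitude at most 1 and only zero tests are allowed. -/
/-- An m-DOCA: can test counter values 0,…,m−1 (and "≥ m"), and change the
counter by up to m in magnitude, or reset it to zero. -/
structure MDOCA (α : Type) (m : ℕ) where
  n : ℕ
  ι : Fin n
  F : Finset (Fin n)
  δ : Fin n → ℕ → α → Fin n × CAct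
  bounded : ∀ q t a d, (δ q t a).2 = CAct.add d → d.natAbs ≤ m

def MDOCA.step {α : Type} {m : ℕ} (M : MDOCA α m) (c : Fin M.n × ℕ) (a : α) :
    Fin M.n × ℕ :=
  match M.δ c.1 (min c.2 m) a with
  | (q, CAct.add d) => (q, ((c.2 : ℤ) + d).toNat)
  | (q, CAct.reset) => (q, 0)

def MDOCA.accepts {α : Type} {m : ℕ} (M : MDOCA α m) (w : List α) : Prop :=
  (w.foldl M.step (M.ι, 0)).1 ∈ M.F


section Conversion

variable {α : Type} {m : ℕ}

/-- Encode a state of `B` and the low-order part of the counter into a single state. -/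
private def mencode {n : ℕ} (hm : 1 ≤ m) (q : Fin n) (r : ℕ) : Fin (n * m) :=
  finProdFinEquiv (q, ⟨r % m, Nat.mod_lt _ hm⟩)

/-- Transition of the converted automaton, given the output of B's transition,
the zero-test result `b` and the low-order counter part `r`. -/
private def mdelta {n : ℕ} (hm : 1 ≤ m) (r : ℕ) (b : Bool) :
    Fin n × CAct → Fin (n * m) × CAct
  | (q', CAct.reset) => (mencode hm q' 0, CAct.reset)
  | (q', CAct.add d) =>
      if b then
        (mencode hm q' ((r : ℤ) + d).toNat, CAct.add (((r : ℤ) + d).toNat / m : ℕ))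
      else
        (mencode hm q' (((r : ℤ) + d) % m).toNat, CAct.add (((r : ℤ) + d) / m))

private lemma mdelta_reset {n : ℕ} (hm : 1 ≤ m) (r : ℕ) (b : Bool) (q' : Fin n) :
    mdelta hm r b (q', CAct.reset) = (mencode hm q' 0, CAct.reset) := rfl

private lemma mdelta_add_true {n : ℕ} (hm : 1 ≤ m) (r : ℕ) (q' : Fin n) (d : ℤ) :
    mdelta hm r true (q', CAct.add d) =
      (mencode hm q' ((r : ℤ) + d).toNat, CAct.add (((r : ℤ) + d).toNat / m : ℕ)) := rfl

private lemma mdelta_add_false {n : ℕ} (hm : 1 ≤ m) (r : ℕ) (q' : Fin n) (d : ℤ) :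
    mdelta hm r false (q', CAct.add d) =
      (mencode hm q' (((r : ℤ) + d) % m).toNat, CAct.add (((r : ℤ) + d) / m)) := rfl

private lemma mdelta_bounded {n : ℕ} (hm : 1 ≤ m) (r : ℕ) (hr : r < m) (b : Bool)
    (out : Fin n × CAct) (hB : ∀ d, out.2 = CAct.add d → d.natAbs ≤ m) :
    ∀ d, (mdelta hm r b out).2 = CAct.add d → d.natAbs ≤ 1 := by
  obtain ⟨q', act⟩ := out
  rcases act with d' | _
  · have hd' : d'.natAbs ≤ m := hB d' rfl
    intro d h
    cases b
    · rw [mdelta_add_false] at h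
      have hd : d = ((r : ℤ) + d') / m := by
        simpa using h.symm
      subst hd
      have hm' : (0 : ℤ) < m := by exact_mod_cast hm
      have h1 : -1 ≤ ((r : ℤ) + d') / (m : ℤ) :=
        (Int.le_ediv_iff_mul_le hm').mpr (by push_cast; omega)
      have h2 : ((r : ℤ) + d') / (m : ℤ) < 2 :=
        (Int.ediv_lt_iff_lt_mul hm').mpr (by push_cast; omega)
      omega
    · rw [mdelta_add_true] at h
      have hd : d = (((r : ℤ) + d').toNat / m : ℕ) := by
        simpa using h.symm
      subst hd
      have h2 : ((r : ℤ) + d').toNat < 2 * m := by omega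
      have : ((r : ℤ) + d').toNat / m < 2 :=
        (Nat.div_lt_iff_lt_mul (by omega)).mpr (by omega)
      simp only [Int.natAbs_natCast]
      omega
  · intro d h
    rw [mdelta_reset] at h
    simp at h

private lemma mdelta_zeroSafe {n : ℕ} (hm : 1 ≤ m) (r : ℕ) (out : Fin n × CAct) :
    ∀ d, (mdelta hm r true out).2 = CAct.add d → 0 ≤ d := by
  obtain ⟨q', act⟩ := out
  rcases act with d' | _
  · intro d h
    rw [mdelta_add_true] at h
    have hd : d = (((r : ℤ) + d').toNat / m : ℕ) := by simpa using h.symm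
    subst hd; positivity
  · intro d h; rw [mdelta_reset] at h; simp at h

/-- The converted DOCA. -/
private def mconv (hm : 1 ≤ m) (B : MDOCA α m) : DOCA α where
  n := B.n * m
  ι := mencode hm B.ι 0
  F := Finset.univ.filter fun s => (finProdFinEquiv.symm s).1 ∈ B.F
  δ s b a :=
    mdelta hm ((finProdFinEquiv.symm s).2 : ℕ) b
      (B.δ (finProdFinEquiv.symm s).1
        (if b then ((finProdFinEquiv.symm s).2 : ℕ) else m) a)
  bounded := fun s b a =>
    mdelta_bounded hm _ (finProdFinEquiv.symm s).2.2 b _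
      (fun d h => B.bounded _ _ _ d h)
  zeroSafe := fun s a =>
    mdelta_zeroSafe hm _ _

/-- Encode a configuration of the m-DOCA as a configuration of the DOCA. -/
private def mencodeCfg (hm : 1 ≤ m) (B : MDOCA α m) (c : Fin B.n × ℕ) :
    Fin (B.n * m) × ℕ :=
  (mencode hm c.1 c.2, c.2 / m)

private lemma mconv_step (hm : 1 ≤ m) (B : MDOCA α m) (c : Fin B.n × ℕ) (a : α) :
    (mconv hm B).step (mencodeCfg hm B c) a = mencodeCfg hm B (B.step c a) := by
  obtain ⟨q, v⟩ := c
  have hm0 : 0 < m := hm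
  set b : Bool := (v / m == 0) with hbdef
  have hb : b = decide (v < m) := by
    rw [hbdef]
    rcases Nat.lt_or_ge v m with h | h
    · simp [Nat.div_eq_of_lt h, h]
    · have : v / m ≠ 0 := by
        have := Nat.div_le_div_right (c := m) h
        rw [Nat.div_self hm0] at this; omega
      simp [this, Nat.not_lt.mpr h]
  have hδ : ∀ b' a', (mconv hm B).δ (mencode hm q v) b' a' =
      mdelta hm (v % m) b' (B.δ q (if b' then v % m else m) a') := by
    intro b' a'
    show mdelta hm ((finProdFinEquiv.symm (mencode hm q v)).2 : ℕ) b' _ = _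
    rw [mencode, Equiv.symm_apply_apply]
  have htest : (if b then v % m else m) = min v m := by
    rw [hb]
    rcases Nat.lt_or_ge v m with h | h
    · simp [h, Nat.mod_eq_of_lt h, Nat.min_eq_left (Nat.le_of_lt h)]
    · simp [Nat.not_lt.mpr h, Nat.min_eq_right h]
  show (mconv hm B).step (mencode hm q v, v / m) a = _
  rw [DOCA.step]
  simp only [show ((mencode hm q v, v / m) : Fin (B.n * m) × ℕ).2 = v / m from rfl,
    show ((mencode hm q v, v / m) : Fin (B.n * m) × ℕ).1 = mencode hm q v from rfl]
  rw [← hbdef, hδ, htest]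
  rw [MDOCA.step]
  rcases hout : B.δ q (min v m) a with ⟨q', act⟩
  rcases act with d | _
  · -- add case
    have hd : d.natAbs ≤ m := B.bounded _ _ _ d (by rw [hout])
    rcases Nat.lt_or_ge v m with h | h
    · -- small counter: test is true
      have hb' : b = true := by rw [hb]; simp [h]
      rw [hb', mdelta_add_true]
      simp only [Nat.mod_eq_of_lt h]
      have hvdiv : v / m = 0 := Nat.div_eq_of_lt h
      refine Prod.ext ?_ ?_
      · rfl
      · show (((v / m : ℕ) : ℤ) + ((((v : ℤ) + d).toNat / m : ℕ) : ℤ)).toNat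
            = ((v : ℤ) + d).toNat / m
        rw [hvdiv]
        simp only [Nat.cast_zero, zero_add, Int.toNat_natCast]
    · -- large counter: test is false
      have hb' : b = false := by rw [hb]; simp [Nat.not_lt.mpr h]
      rw [hb', mdelta_add_false]
      set x : ℤ := ((v % m : ℕ) : ℤ) + d with hx
      have hmz : (m : ℤ) ≠ 0 := by exact_mod_cast Nat.pos_iff_ne_zero.mp hm0
      have hvd : (0 : ℤ) ≤ (v : ℤ) + d := by omega
      have hv' : (((v : ℤ) + d).toNat : ℤ) = (v : ℤ) + d := Int.toNat_of_nonneg hvd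
      have hsplit : (v : ℤ) + d = x + (m : ℤ) * ((v / m : ℕ) : ℤ) := by
        have h1 : ((v % m : ℕ) : ℤ) + (m : ℤ) * ((v / m : ℕ) : ℤ) = (v : ℤ) := by
          exact_mod_cast congrArg (Nat.cast : ℕ → ℤ) (Nat.mod_add_div v m)
        rw [hx]; linarith
      have hmod : x % (m : ℤ) = ((((v : ℤ) + d).toNat % m : ℕ) : ℤ) := by
        rw [Int.natCast_mod, hv', hsplit, Int.add_mul_emod_self_left]
      have hdiv : ((v / m : ℕ) : ℤ) + x / (m : ℤ) = ((((v : ℤ) + d).toNat / m : ℕ) : ℤ) := by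
        conv_rhs => rw [Int.natCast_div, hv', hsplit, Int.add_mul_ediv_left _ _ hmz]
        ring
      refine Prod.ext ?_ ?_
      · show mencode hm q' (x % (m : ℤ)).toNat = mencode hm q' (((v : ℤ) + d).toNat)
        rw [mencode, mencode]
        congr 1
        refine congrArg _ (Fin.ext ?_)
        show (x % (m : ℤ)).toNat % m = ((v : ℤ) + d).toNat % m
        have : (x % (m : ℤ)).toNat = ((v : ℤ) + d).toNat % m := by
          rw [hmod, Int.toNat_natCast]
        rw [this, Nat.mod_mod_of_dvd _ dvd_rfl]
      · show (((v / m : ℕ) : ℤ) + x / (m : ℤ)).toNat = ((v : ℤ) + d).toNat / m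
        rw [hdiv, Int.toNat_natCast]
  · -- reset case
    rw [mdelta_reset]
    refine Prod.ext ?_ ?_
    · show mencode hm q' 0 = mencode hm q' 0
      rfl
    · show (0 : ℕ) = 0 / m
      rw [Nat.zero_div]

private lemma mconv_run (hm : 1 ≤ m) (B : MDOCA α m) (w : List α) (c : Fin B.n × ℕ) :
    (mconv hm B).run (mencodeCfg hm B c) w = mencodeCfg hm B (w.foldl B.step c) := by
  induction w generalizing c with
  | nil => rfl
  | cons a w ih =>
      show (mconv hm B).run ((mconv hm B).step (mencodeCfg hm B c) a) w = _
      rw [mconv_step, ih]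
      rfl

end Conversion

theorem mdoca_to_doca (α : Type) (m : ℕ) (hm : 1 ≤ m) (B : MDOCA α m) :
    ∃ C : DOCA α, C.n ≤ B.n * m ∧ ∀ w, C.accepts w ↔ B.accepts w := by
  refine ⟨mconv hm B, le_refl _, fun w => ?_⟩
  have hinit : (((mconv hm B).ι, 0) : Fin (mconv hm B).n × ℕ) = mencodeCfg hm B (B.ι, 0) := by
    refine Prod.ext rfl ?_
    show 0 = 0 / m
    simp
  rw [DOCA.accepts, DOCA.reach, DOCA.run] at *
  rw [show ((mconv hm B).ι, 0) = mencodeCfg hm B (B.ι, 0) from hinit]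
  rw [show (List.foldl (mconv hm B).step (mencodeCfg hm B (B.ι, 0)) w)
      = (mconv hm B).run (mencodeCfg hm B (B.ι, 0)) w from rfl]
  rw [mconv_run, MDOCA.accepts]
  show mencode hm (w.foldl B.step (B.ι, 0)).1 (w.foldl B.step (B.ι, 0)).2 ∈
    Finset.univ.filter (fun s => (finProdFinEquiv.symm s).1 ∈ B.F) ↔ _
  rw [Finset.mem_filter, mencode, Equiv.symm_apply_apply]
  simp
end
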